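/- Let P and Q be probability measures on a measurable space (A, F) with P absolutely continuous with respect to Q, and suppose there are constants β₁ ∈ (0,1] and β₂ ∈ [0,1] such that β₂ ≤ dP/dQ(a) ≤ 1/β₁ for Q-almost every a. Then the Rényi divergence of order 2 (in nats), D₂(P‖Q) = ln(1 + χ²(P,Q)), satisfies D₂(P‖Q) ≤ ln(1 + max{ 1/β₁ − 1, 1 − β₂ }·|P−Q|); in particular the relative entropy satisfies D(P‖Q) ≤ ln(1 + max{ 1/β₁ − 1, 1 − β₂ }·|P−Q|). -/

import Mathlib

open MeasureTheory

/-- Chi-squared divergence: `χ²(P,Q) = ∫ (dP/dQ − 1)² dQ`. -/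
noncomputable def chiSqDiv {A : Type*} [MeasurableSpace A] (P Q : Measure A) : ℝ :=
  ∫ a, ((P.rnDeriv Q a).toReal - 1) ^ 2 ∂Q

/-- Relative entropy (in nats): `D(P‖Q) = ∫ ln(dP/dQ) dP`. -/
noncomputable def relEntropyNats {A : Type*} [MeasurableSpace A] (P Q : Measure A) : ℝ :=
  ∫ a, Real.log ((P.rnDeriv Q a).toReal) ∂P

/-- Total variation distance: `|P−Q| = 2 ⨆_{E measurable} |P(E) − Q(E)|`. -/
noncomputable def tvDist {A : Type*} [MeasurableSpace A] (P Q : Measure A) : ℝ :=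
  2 * ⨆ E : {E : Set A // MeasurableSet E}, |(P E.1).toReal - (Q E.1).toReal|

theorem renyi2_and_relEntropy_le_tv_general {A : Type*} [MeasurableSpace A]
    (P Q : Measure A) [IsProbabilityMeasure P] [IsProbabilityMeasure Q]
    (hPQ : P ≪ Q) (β₁ β₂ : ℝ) (hβ₁ : β₁ ∈ Set.Ioc (0 : ℝ) 1) (hβ₂ : β₂ ∈ Set.Icc (0 : ℝ) 1)
    (hbound : ∀ᵐ a ∂Q, β₂ ≤ ((P.rnDeriv Q) a).toReal ∧ ((P.rnDeriv Q) a).toReal ≤ 1 / β₁) :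
    Real.log (1 + chiSqDiv P Q) ≤
        Real.log (1 + max (1 / β₁ - 1) (1 - β₂) * tvDist P Q) ∧
      relEntropyNats P Q ≤
        Real.log (1 + max (1 / β₁ - 1) (1 - β₂) * tvDist P Q) := by
  set f : A → ℝ := fun a => ((P.rnDeriv Q) a).toReal with hf_def
  set M : ℝ := max (1 / β₁ - 1) (1 - β₂) with hM_def
  obtain ⟨hβ₁0, hβ₁1⟩ := hβ₁
  obtain ⟨hβ₂0, hβ₂1⟩ := hβ₂
  have hβ₁inv : (1:ℝ) ≤ 1 / β₁ := by
    rw [le_div_iff₀ hβ₁0]; linarith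
  have hM0 : 0 ≤ M := le_trans (by linarith) (le_max_right _ _)
  have hf_meas : Measurable f := (Measure.measurable_rnDeriv P Q).ennreal_toReal
  have hf_nonneg : ∀ a, 0 ≤ f a := fun a => ENNReal.toReal_nonneg
  -- integrability facts over Q
  have hf_int : Integrable f Q := Measure.integrable_toReal_rnDeriv
  have hfQ1 : ∫ a, f a ∂Q = 1 := by
    rw [hf_def]
    rw [Measure.integral_toReal_rnDeriv hPQ]
    simp
  -- |f - 1| ≤ M  Q-a.e.
  have habs : ∀ᵐ a ∂Q, |f a - 1| ≤ M := by
    filter_upwards [hbound] with a ⟨h1, h2⟩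
    have hm1 : 1 / β₁ - 1 ≤ M := le_max_left _ _
    have hm2 : 1 - β₂ ≤ M := le_max_right _ _
    rw [abs_le]; constructor <;> linarith
  have habs_int : Integrable (fun a => |f a - 1|) Q := (hf_int.sub (integrable_const 1)).abs
  -- χ² ≤ M * ∫ |f-1| dQ
  have hsq_int : Integrable (fun a => (f a - 1) ^ 2) Q := by
    refine Integrable.mono' (habs_int.const_mul M) ?_ ?_
    · exact ((hf_meas.sub measurable_const).pow measurable_const).aestronglyMeasurable
    · filter_upwards [habs] with a ha
      rw [Real.norm_eq_abs, abs_of_nonneg (sq_nonneg _)]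
      have := abs_nonneg (f a - 1)
      nlinarith [sq_abs (f a - 1)]
  have hchi_nonneg : 0 ≤ chiSqDiv P Q := integral_nonneg fun a => sq_nonneg _
  have hchi_le : chiSqDiv P Q ≤ M * ∫ a, |f a - 1| ∂Q := by
    rw [← integral_const_mul]
    refine integral_mono_ae hsq_int (habs_int.const_mul M) ?_
    filter_upwards [habs] with a ha
    have := abs_nonneg (f a - 1)
    nlinarith [sq_abs (f a - 1)]
  -- L1 norm equals 2 * (P E₀ - Q E₀)
  set E₀ : Set A := {a | 1 < f a} with hE₀_def
  have hE₀ : MeasurableSet E₀ := measurableSet_lt measurable_const hf_meas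
  have hint0 : ∫ a, (f a - 1) ∂Q = 0 := by
    rw [integral_sub hf_int (integrable_const 1), hfQ1]; simp
  have hg_int : Integrable (fun a => f a - 1) Q := hf_int.sub (integrable_const 1)
  have hsplit : ∫ a in E₀, (f a - 1) ∂Q + ∫ a in E₀ᶜ, (f a - 1) ∂Q = 0 := by
    rw [integral_add_compl hE₀ hg_int, hint0]
  have habs_split : ∫ a, |f a - 1| ∂Q = 2 * ∫ a in E₀, (f a - 1) ∂Q := by
    have h1 : ∫ a in E₀, |f a - 1| ∂Q = ∫ a in E₀, (f a - 1) ∂Q := by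
      refine setIntegral_congr_fun hE₀ fun a ha => ?_
      exact abs_of_pos (sub_pos.mpr ha)
    have h2 : ∫ a in E₀ᶜ, |f a - 1| ∂Q = -∫ a in E₀ᶜ, (f a - 1) ∂Q := by
      rw [← integral_neg]
      refine setIntegral_congr_fun hE₀.compl fun a ha => ?_
      have : f a ≤ 1 := not_lt.mp (by simpa [hE₀_def] using ha)
      rw [abs_of_nonpos (by linarith)]
    rw [← integral_add_compl hE₀ habs_int, h1, h2]
    linarith
  have hPE : ∫ a in E₀, f a ∂Q = (P E₀).toReal :=
    Measure.setIntegral_toReal_rnDeriv hPQ E₀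
  have hsetE : ∫ a in E₀, (f a - 1) ∂Q = (P E₀).toReal - (Q E₀).toReal := by
    rw [integral_sub (hf_int.restrict) (integrable_const 1), hPE]
    simp [Measure.restrict_apply_univ]
    rfl
  -- ∫|f-1| ≤ tvDist
  have hbdd : BddAbove (Set.range fun E : {E : Set A // MeasurableSet E} =>
      |(P E.1).toReal - (Q E.1).toReal|) := by
    refine ⟨2, ?_⟩
    rintro x ⟨E, rfl⟩
    have h1 : (P E.1).toReal ≤ 1 := by
      have := prob_le_one (μ := P) (s := E.1)
      simpa using ENNReal.toReal_le_of_le_ofReal one_pos.le (by simpa using this)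
    have h2 : (Q E.1).toReal ≤ 1 := by
      have := prob_le_one (μ := Q) (s := E.1)
      simpa using ENNReal.toReal_le_of_le_ofReal one_pos.le (by simpa using this)
    have h3 : 0 ≤ (P E.1).toReal := ENNReal.toReal_nonneg
    have h4 : 0 ≤ (Q E.1).toReal := ENNReal.toReal_nonneg
    rw [abs_le]; constructor <;> linarith
  have htv_nonneg : 0 ≤ tvDist P Q := by
    have := Real.iSup_nonneg (f := fun E : {E : Set A // MeasurableSet E} =>
      |(P E.1).toReal - (Q E.1).toReal|) fun E => abs_nonneg _
    unfold tvDist; linarith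
  have hL1_le_tv : ∫ a, |f a - 1| ∂Q ≤ tvDist P Q := by
    rw [habs_split, hsetE]
    unfold tvDist
    have := le_ciSup hbdd (⟨E₀, hE₀⟩ : {E : Set A // MeasurableSet E})
    have h := le_abs_self ((P E₀).toReal - (Q E₀).toReal)
    linarith
  have hchi_tv : chiSqDiv P Q ≤ M * tvDist P Q :=
    hchi_le.trans (mul_le_mul_of_nonneg_left hL1_le_tv hM0)
  have hlog1 : Real.log (1 + chiSqDiv P Q) ≤ Real.log (1 + M * tvDist P Q) :=
    Real.log_le_log (by linarith) (by linarith)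
  refine ⟨hlog1, ?_⟩
  -- relative entropy part
  by_cases hint : Integrable (fun a => Real.log (f a)) P
  · -- c = 1 + χ² = ∫ f dP
    have hf2_int : Integrable (fun a => f a * f a) Q := by
      refine Integrable.mono' (hf_int.const_mul (1 / β₁)) ?_ ?_
      · exact (hf_meas.mul hf_meas).aestronglyMeasurable
      · filter_upwards [hbound] with a ⟨h1, h2⟩
        rw [Real.norm_eq_abs, abs_of_nonneg (mul_nonneg (hf_nonneg a) (hf_nonneg a))]
        exact mul_le_mul_of_nonneg_right h2 (hf_nonneg a)
    have hc : ∫ a, f a ∂P = 1 + chiSqDiv P Q := by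
      have h1 : ∫ a, f a ∂P = ∫ a, f a * f a ∂Q := by
        rw [← integral_rnDeriv_smul hPQ (f := f)]
        simp [hf_def, smul_eq_mul]
      have h2 : chiSqDiv P Q = ∫ a, f a * f a ∂Q - 1 := by
        unfold chiSqDiv
        have : ∀ a, (f a - 1) ^ 2 = f a * f a - (2 * f a - 1) := fun a => by ring
        simp_rw [hf_def] at this ⊢
        calc ∫ a, (((P.rnDeriv Q) a).toReal - 1) ^ 2 ∂Q
            = ∫ a, (f a * f a - (2 * f a - 1)) ∂Q := by simp_rw [hf_def]; exact integral_congr_ae (Filter.Eventually.of_forall this)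
          _ = ∫ a, f a * f a ∂Q - ∫ a, (2 * f a - 1) ∂Q :=
              integral_sub hf2_int ((hf_int.const_mul 2).sub (integrable_const 1))
          _ = ∫ a, f a * f a ∂Q - 1 := by
              rw [integral_sub (hf_int.const_mul 2) (integrable_const 1), integral_const_mul, hfQ1]
              simp
              norm_num
      rw [h1, h2]; ring
    set c : ℝ := 1 + chiSqDiv P Q with hc_def
    have hc_pos : 0 < c := by rw [hc_def]; linarith
    -- f integrable w.r.t. P
    have hf_intP : Integrable f P := by
      refine Integrable.mono' (integrable_const (1 / β₁)) hf_meas.aestronglyMeasurable ?_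
      filter_upwards [hPQ.ae_le hbound] with a ⟨h1, h2⟩
      rw [Real.norm_eq_abs, abs_of_nonneg (hf_nonneg a)]; exact h2
    -- pointwise: log f ≤ log c + f/c - 1  P-a.e.
    have hf_posP : ∀ᵐ a ∂P, 0 < f a := by
      filter_upwards [Measure.rnDeriv_pos hPQ, hPQ.ae_le (Measure.rnDeriv_lt_top P Q)]
        with a h1 h2
      exact ENNReal.toReal_pos h1.ne' h2.ne
    have hptwise : ∀ᵐ a ∂P, Real.log (f a) ≤ Real.log c + (f a / c - 1) := by
      filter_upwards [hf_posP] with a ha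
      have h := Real.log_le_sub_one_of_pos (div_pos ha hc_pos)
      rw [Real.log_div ha.ne' hc_pos.ne'] at h
      linarith
    have hDle : relEntropyNats P Q ≤ Real.log c := by
      have hsub : Integrable (fun a => f a / c - 1) P := by
        exact (hf_intP.div_const c).sub (integrable_const 1)
      have h2 : Integrable (fun a => Real.log c + (f a / c - 1)) P := by
        exact (integrable_const _).add hsub
      have h3 := integral_mono_ae hint h2 hptwise
      have h4 : ∫ a, (Real.log c + (f a / c - 1)) ∂P = Real.log c := by
        have h5 : ∫ a, (f a / c - 1) ∂P = 0 := by
          rw [integral_sub (hf_intP.div_const c) (integrable_const 1), integral_div, hc]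
          simp [div_self hc_pos.ne']
        rw [integral_add (integrable_const _) hsub, h5]
        simp
      rw [relEntropyNats]
      rw [h4] at h3
      exact h3
    exact hDle.trans hlog1
  · rw [relEntropyNats, integral_undef hint]
    refine Real.log_nonneg ?_
    nlinarith
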